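/- Let n ≥ 1, let k ≥ 2 be an integer, and set P = k · 2^{2n+1}. Define y_I^N := 2^n / (P·|I| − 1) for every nonempty I ⊆ N, and y_∅^N := 1 − Σ_{∅≠I⊆N} y_I^N. Then: (i) y_I^N > 0 for all I ⊆ N; (ii) Σ_{I⊆N} y_I^N = 1; (iii) Σ_{I⊆N} 1/(y_I^N · (|I| − 1/P)) < 0 (where for I = ∅ the factor |I| − 1/P = −1/P is negative and for all other I it is positive); and (iv) Σ_{I⊆N} |I| · y_I^N ≤ 1/k. Consequently the Lasserre relaxation at level n−1 of the Min-Knapsack instance min{ Σ_i x_i : Σ_i x_i ≥ 1/P, x ∈ {0,1}^n } has optimum at most 1/k while the integral optimum is 1, giving integrality gap at least k. -/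

import Mathlib

set_option maxHeartbeats 1600000

open Finset Matrix

lemma sum_superset_neg_one_pow {n : ℕ} (I : Finset (Fin n)) (hI : I ≠ Finset.univ) :
    ∑ K : Finset (Fin n), (if I ⊆ K then ((-1:ℝ)) ^ K.card else 0) = 0 := by
  classical
  rw [Finset.sum_ite, Finset.sum_const_zero, add_zero]
  have hbij : ∑ K ∈ Finset.univ.filter (fun K => I ⊆ K), ((-1:ℝ)) ^ K.card
      = ∑ J ∈ Iᶜ.powerset, ((-1:ℝ)) ^ (I ∪ J).card := by
    refine Finset.sum_nbij' (fun K => K \ I) (fun J => I ∪ J) ?_ ?_ ?_ ?_ ?_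
    · intro K hK
      simp only [Finset.mem_filter] at hK
      simp only [Finset.mem_powerset]
      intro a ha
      simp only [Finset.mem_sdiff] at ha
      simp [ha.2]
    · intro J hJ
      simp [Finset.mem_filter]
    · intro K hK
      simp only [Finset.mem_filter] at hK
      exact Finset.union_sdiff_of_subset hK.2
    · intro J hJ
      simp only [Finset.mem_powerset] at hJ
      show (I ∪ J) \ I = J
      apply Finset.union_sdiff_cancel_left
      rw [Finset.disjoint_left]
      intro a haI haJ
      have := hJ haJ
      simp only [Finset.mem_compl] at this
      exact this haI
    · intro K hK
      simp only [Finset.mem_filter] at hK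
      rw [Finset.union_sdiff_of_subset hK.2]
  rw [hbij]
  have hdisj : ∀ J ∈ Iᶜ.powerset, ((-1:ℝ)) ^ (I ∪ J).card = (-1:ℝ)^I.card * (-1:ℝ)^J.card := by
    intro J hJ
    simp only [Finset.mem_powerset] at hJ
    rw [Finset.card_union_of_disjoint, pow_add]
    rw [Finset.disjoint_left]
    intro a haI haJ
    have := hJ haJ
    simp only [Finset.mem_compl] at this
    exact this haI
  rw [Finset.sum_congr rfl hdisj, ← Finset.mul_sum]
  have hne : Iᶜ ≠ ∅ := fun h => hI (by simpa [Finset.compl_eq_empty_iff] using h)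
  have hz : (∑ J ∈ Iᶜ.powerset, ((-1:ℝ)) ^ J.card) = 0 := by
    have := Finset.sum_powerset_neg_one_pow_card (x := Iᶜ)
    rw [if_neg hne] at this
    have := congrArg (fun z : ℤ => (z : ℝ)) this
    push_cast at this
    simpa using this
  rw [hz, mul_zero]

lemma quadform_eq {ι κ : Type*} [Fintype ι] [Fintype κ] (w : κ → ℝ) (v : κ → ι → ℝ) (x : ι → ℝ) :
    ∑ I : ι, x I * (∑ J : ι, (∑ K : κ, w K * v K I * v K J) * x J)
      = ∑ K : κ, w K * (∑ I : ι, v K I * x I) ^ 2 := by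
  have h1 : ∑ I : ι, x I * (∑ J : ι, (∑ K : κ, w K * v K I * v K J) * x J)
      = ∑ I : ι, ∑ J : ι, ∑ K : κ, x I * (w K * v K I * v K J * x J) := by
    refine Finset.sum_congr rfl fun I _ => ?_
    rw [Finset.mul_sum]
    refine Finset.sum_congr rfl fun J _ => ?_
    rw [Finset.sum_mul, Finset.mul_sum]
  rw [h1]
  have h2 : ∀ I : ι, ∑ J : ι, ∑ K : κ, x I * (w K * v K I * v K J * x J)
      = ∑ K : κ, ∑ J : ι, x I * (w K * v K I * v K J * x J) := fun I => Finset.sum_comm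
  rw [Finset.sum_congr rfl (fun I _ => h2 I), Finset.sum_comm]
  refine Finset.sum_congr rfl fun K _ => ?_
  rw [sq, Finset.sum_mul_sum, Finset.mul_sum]
  refine Finset.sum_congr rfl fun I _ => ?_
  rw [Finset.mul_sum]
  refine Finset.sum_congr rfl fun J _ => ?_
  ring

lemma quad_nonneg {κ : Type*} [Fintype κ] [DecidableEq κ] (c t : κ → ℝ) (k0 : κ)
    (hneg : c k0 < 0) (hpos : ∀ k, k ≠ k0 → 0 < c k)
    (hrel : |t k0| ≤ ∑ k ∈ Finset.univ.erase k0, |t k|)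
    (hA : ∑ k ∈ Finset.univ.erase k0, 1 / c k ≤ 1 / (-c k0)) :
    0 ≤ ∑ k : κ, c k * t k ^ 2 := by
  classical
  have hposs : ∀ k ∈ Finset.univ.erase k0, 0 < c k :=
    fun k hk => hpos k (Finset.ne_of_mem_erase hk)
  have hS0 : 0 ≤ ∑ k ∈ Finset.univ.erase k0, c k * t k ^ 2 :=
    Finset.sum_nonneg fun k hk => mul_nonneg (hposs k hk).le (sq_nonneg _)
  have hA0 : 0 ≤ ∑ k ∈ Finset.univ.erase k0, 1 / c k :=
    Finset.sum_nonneg fun k hk => le_of_lt (div_pos one_pos (hposs k hk))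
  have hCS : (∑ k ∈ Finset.univ.erase k0, |t k|) ^ 2
      ≤ (∑ k ∈ Finset.univ.erase k0, 1 / c k) * (∑ k ∈ Finset.univ.erase k0, c k * t k ^ 2) := by
    have key := Finset.sum_mul_sq_le_sq_mul_sq (Finset.univ.erase k0)
      (fun k => Real.sqrt (1 / c k)) (fun k => Real.sqrt (c k) * |t k|)
    have e1 : ∀ k ∈ Finset.univ.erase k0,
        Real.sqrt (1 / c k) * (Real.sqrt (c k) * |t k|) = |t k| := by
      intro k hk
      rw [← mul_assoc, ← Real.sqrt_mul (le_of_lt (div_pos one_pos (hposs k hk))),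
        one_div_mul_cancel (hposs k hk).ne', Real.sqrt_one, one_mul]
    have e2 : ∀ k ∈ Finset.univ.erase k0, Real.sqrt (1 / c k) ^ 2 = 1 / c k := fun k hk =>
      Real.sq_sqrt (le_of_lt (div_pos one_pos (hposs k hk)))
    have e3 : ∀ k ∈ Finset.univ.erase k0, (Real.sqrt (c k) * |t k|) ^ 2 = c k * t k ^ 2 := by
      intro k hk
      rw [mul_pow, Real.sq_sqrt (hposs k hk).le, sq_abs]
    rw [Finset.sum_congr rfl e1, Finset.sum_congr rfl e2, Finset.sum_congr rfl e3] at key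
    exact key
  have h1 : t k0 ^ 2
      ≤ (∑ k ∈ Finset.univ.erase k0, 1 / c k) * (∑ k ∈ Finset.univ.erase k0, c k * t k ^ 2) :=
    calc t k0 ^ 2 = |t k0| ^ 2 := (sq_abs _).symm
      _ ≤ (∑ k ∈ Finset.univ.erase k0, |t k|) ^ 2 := by
          apply pow_le_pow_left₀ (abs_nonneg _) hrel
      _ ≤ _ := hCS
  have hsplit : ∑ k : κ, c k * t k ^ 2
      = c k0 * t k0 ^ 2 + ∑ k ∈ Finset.univ.erase k0, c k * t k ^ 2 :=
    (Finset.add_sum_erase _ _ (Finset.mem_univ k0)).symm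
  rw [hsplit]
  have hA1 : (∑ k ∈ Finset.univ.erase k0, 1 / c k) * (-c k0) ≤ 1 := by
    have h2 : (0:ℝ) < -c k0 := by linarith
    calc _ ≤ (1 / (-c k0)) * (-c k0) := mul_le_mul_of_nonneg_right hA h2.le
      _ = 1 := by rw [one_div_mul_cancel h2.ne']
  nlinarith [mul_le_mul_of_nonneg_left h1 (neg_nonneg.mpr hneg.le)]
/-- The shift operator: `(g∗y)_I = ∑ i, a i * y_{I ∪ {i}} + b * y_I`. -/
def shiftVec {n : ℕ} (a : Fin n → ℝ) (b : ℝ) (y : Finset (Fin n) → ℝ)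
    (I : Finset (Fin n)) : ℝ :=
  (∑ i : Fin n, a i * y (insert i I)) + b * y I

/-- The index set `P_{n-1}(N)`: all subsets of `N = {1,...,n}` except `N` itself. -/
abbrev Idx (n : ℕ) := {I : Finset (Fin n) // I ≠ Finset.univ}

/-- The `(n-1)`-moment matrix of `w`, with `(I,J)`-entry `w_{I ∪ J}`. -/
def Mnm1 {n : ℕ} (w : Finset (Fin n) → ℝ) : Matrix (Idx n) (Idx n) ℝ :=
  Matrix.of fun I J => w (I.1 ∪ J.1)

/-- The full `n`-moment matrix of `w`, indexed by all subsets of `N`. -/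
def Mfull {n : ℕ} (w : Finset (Fin n) → ℝ) : Matrix (Finset (Fin n)) (Finset (Fin n)) ℝ :=
  Matrix.of fun I J => w (I ∪ J)

/-- Unbounded integrality gap for Min-Knapsack `min{∑ x_i : ∑ x_i ≥ 1/P}` with
`P = k·2^{2n+1}`: the explicit family `Y` is positive, sums to one, satisfies the PSD
condition, has objective value at most `1/k`, and hence yields a feasible solution of
the level-`(n-1)` Lasserre relaxation of value at most `1/k`, while the integral optimum
is `1`. -/
theorem min_knapsack_unbounded_gap (n k : ℕ) (hn : 1 ≤ n) (hk : 2 ≤ k)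
    (P : ℝ) (hP : P = (k : ℝ) * 2 ^ (2 * n + 1))
    (Y : Finset (Fin n) → ℝ)
    (hYne : ∀ I : Finset (Fin n), I ≠ ∅ → Y I = 2 ^ n / (P * I.card - 1))
    (hY0 : Y ∅ = 1 - ∑ I ∈ Finset.univ.filter (fun I : Finset (Fin n) => I ≠ ∅), Y I) :
    (∀ I : Finset (Fin n), 0 < Y I) ∧
    (∑ I : Finset (Fin n), Y I = 1) ∧
    (∑ I : Finset (Fin n), 1 / (Y I * ((I.card : ℝ) - 1 / P)) < 0) ∧
    (∑ I : Finset (Fin n), (I.card : ℝ) * Y I ≤ 1 / k) ∧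
    (∃ y : Finset (Fin n) → ℝ,
        y ∅ = 1 ∧
        (Mfull y).PosSemidef ∧
        (Mnm1 (shiftVec (fun _ : Fin n => (1 : ℝ)) (-(1 / P)) y)).PosSemidef ∧
        (∑ i : Fin n, y {i}) ≤ 1 / k) ∧
    IsLeast {val : ℝ | ∃ I : Finset (Fin n), 1 / P ≤ (I.card : ℝ) ∧ val = (I.card : ℝ)} 1 := by
  classical
  set q : ℝ := 2 ^ n with hq
  have hq2 : (2:ℝ) ≤ q := by
    rw [hq]
    calc (2:ℝ) = 2 ^ 1 := (pow_one 2).symm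
      _ ≤ 2 ^ n := by exact pow_le_pow_right₀ one_le_two hn
  have hq0 : (0:ℝ) < q := by linarith
  have hkR : (2:ℝ) ≤ (k:ℝ) := by exact_mod_cast hk
  have hPq : P = 2 * (k:ℝ) * q ^ 2 := by
    rw [hP, hq, pow_succ, mul_comm 2 n, pow_mul]
    ring
  have hP4 : 4 * q ^ 2 ≤ P := by nlinarith
  have hP1 : (1:ℝ) < P := by nlinarith
  have hP0 : (0:ℝ) < P := by linarith
  have hcard1 : ∀ I : Finset (Fin n), I ≠ ∅ → (1:ℝ) ≤ (I.card : ℝ) := by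
    intro I hI
    have : 1 ≤ I.card := Finset.card_pos.mpr (Finset.nonempty_of_ne_empty hI)
    exact_mod_cast this
  have hden : ∀ I : Finset (Fin n), I ≠ ∅ → 0 < P * (I.card:ℝ) - 1 ∧ P - 1 ≤ P * (I.card:ℝ) - 1 := by
    intro I hI
    have h1 := hcard1 I hI
    constructor <;> nlinarith
  have hYposne : ∀ I : Finset (Fin n), I ≠ ∅ → 0 < Y I := by
    intro I hI
    rw [hYne I hI]
    exact div_pos hq0 (hden I hI).1
  have hYle : ∀ I : Finset (Fin n), I ≠ ∅ → Y I ≤ q / (P - 1) := by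
    intro I hI
    rw [hYne I hI]
    exact div_le_div_of_nonneg_left hq0.le (by linarith) (hden I hI).2
  -- the filter set
  have hsfe : Finset.univ.filter (fun I : Finset (Fin n) => I ≠ ∅) = Finset.univ.erase ∅ :=
    Finset.filter_ne' _ _
  have hcards : (Finset.univ.filter (fun I : Finset (Fin n) => I ≠ ∅)).card = 2 ^ n - 1 := by
    rw [hsfe, Finset.card_erase_of_mem (Finset.mem_univ _), Finset.card_univ,
      Fintype.card_finset, Fintype.card_fin]
  have hcardsR : ((Finset.univ.filter (fun I : Finset (Fin n) => I ≠ ∅)).card : ℝ) = q - 1 := by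
    rw [hcards, hq]
    have h1 : 1 ≤ 2 ^ n := Nat.one_le_two_pow
    push_cast [h1]
    ring
  -- sum over nonempty sets
  have hsum_le : ∑ I ∈ Finset.univ.filter (fun I : Finset (Fin n) => I ≠ ∅), Y I
      ≤ (q - 1) * (q / (P - 1)) := by
    calc ∑ I ∈ Finset.univ.filter (fun I : Finset (Fin n) => I ≠ ∅), Y I
        ≤ (Finset.univ.filter (fun I : Finset (Fin n) => I ≠ ∅)).card • (q / (P - 1)) := by
          apply Finset.sum_le_card_nsmul
          intro I hI
          exact hYle I (Finset.mem_filter.mp hI).2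
      _ = (q - 1) * (q / (P - 1)) := by rw [nsmul_eq_mul, hcardsR]
  have hsum_pos : 0 < ∑ I ∈ Finset.univ.filter (fun I : Finset (Fin n) => I ≠ ∅), Y I := by
    have hne : Nonempty (Fin n) := ⟨⟨0, hn⟩⟩
    apply Finset.sum_pos
    · intro I hI
      exact hYposne I (Finset.mem_filter.mp hI).2
    · exact ⟨Finset.univ, Finset.mem_filter.mpr ⟨Finset.mem_univ _, Finset.univ_nonempty.ne_empty⟩⟩
  have hsum_lt1 : ∑ I ∈ Finset.univ.filter (fun I : Finset (Fin n) => I ≠ ∅), Y I < 1 := by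
    have h2 : (q - 1) * (q / (P - 1)) < 1 := by
      rw [mul_div_assoc', div_lt_one (by linarith : (0:ℝ) < P - 1)]
      nlinarith
    linarith
  have hY0pos : 0 < Y ∅ := by rw [hY0]; linarith
  have hY0le1 : Y ∅ ≤ 1 := by rw [hY0]; linarith
  -- (i)
  have part1 : ∀ I : Finset (Fin n), 0 < Y I := by
    intro I
    by_cases h : I = ∅
    · rw [h]; exact hY0pos
    · exact hYposne I h
  -- (ii)
  have hsplit : ∀ f : Finset (Fin n) → ℝ, ∑ I : Finset (Fin n), f I
      = f ∅ + ∑ I ∈ Finset.univ.filter (fun I : Finset (Fin n) => I ≠ ∅), f I := by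
    intro f
    rw [hsfe, Finset.add_sum_erase _ _ (Finset.mem_univ ∅)]
  have part2 : ∑ I : Finset (Fin n), Y I = 1 := by
    rw [hsplit Y, hY0]; ring
  -- common computation: Y I * (card - 1/P) = q / P for nonempty I
  have hcK : ∀ I : Finset (Fin n), I ≠ ∅ → Y I * ((I.card : ℝ) - 1 / P) = q / P := by
    intro I hI
    rw [hYne I hI]
    have h1 : P * (I.card:ℝ) - 1 ≠ 0 := (hden I hI).1.ne'
    field_simp
  -- (iii)
  have part3 : ∑ I : Finset (Fin n), 1 / (Y I * ((I.card : ℝ) - 1 / P)) < 0 := by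
    rw [hsplit]
    have he : 1 / (Y ∅ * (((∅ : Finset (Fin n)).card : ℝ) - 1 / P)) = -(P / Y ∅) := by
      rw [Finset.card_empty]
      rw [show ((0:ℕ):ℝ) - 1/P = -(1/P) by push_cast; ring]
      field_simp
    have hs : ∑ I ∈ Finset.univ.filter (fun I : Finset (Fin n) => I ≠ ∅),
        1 / (Y I * ((I.card : ℝ) - 1 / P)) = (q - 1) * (P / q) := by
      rw [Finset.sum_congr rfl (fun I hI => by
        rw [hcK I (Finset.mem_filter.mp hI).2, one_div_div]), Finset.sum_const,
        nsmul_eq_mul, hcardsR]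
    rw [he, hs]
    have hPY : P ≤ P / Y ∅ := by
      rw [le_div_iff₀ hY0pos]; nlinarith
    have hqP : q * (P / q) = P := by field_simp
    have hPq0 : 0 < P / q := div_pos hP0 hq0
    nlinarith
  -- (iv)
  have part4 : ∑ I : Finset (Fin n), (I.card : ℝ) * Y I ≤ 1 / (k:ℝ) := by
    rw [hsplit]
    have he : ((∅ : Finset (Fin n)).card : ℝ) * Y ∅ = 0 := by simp
    rw [he, zero_add]
    have hterm : ∀ I ∈ Finset.univ.filter (fun I : Finset (Fin n) => I ≠ ∅),
        (I.card : ℝ) * Y I ≤ q / (P - 1) := by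
      intro I hI
      have hI' := (Finset.mem_filter.mp hI).2
      rw [hYne I hI', mul_div_assoc', div_le_div_iff₀ (hden I hI').1 (by linarith : (0:ℝ) < P - 1)]
      have h1 := hcard1 I hI'
      nlinarith
    calc ∑ I ∈ Finset.univ.filter (fun I : Finset (Fin n) => I ≠ ∅), (I.card : ℝ) * Y I
        ≤ (Finset.univ.filter (fun I : Finset (Fin n) => I ≠ ∅)).card • (q / (P - 1)) :=
          Finset.sum_le_card_nsmul _ _ _ hterm
      _ = (q - 1) * (q / (P - 1)) := by rw [nsmul_eq_mul, hcardsR]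
      _ ≤ 1 / (k:ℝ) := by
          rw [mul_div_assoc', div_le_div_iff₀ (by linarith : (0:ℝ) < P - 1) (by linarith : (0:ℝ) < (k:ℝ))]
          nlinarith
  -- (v) : the pseudo-moment vector
  set y : Finset (Fin n) → ℝ := fun J => ∑ K : Finset (Fin n), (if J ⊆ K then Y K else 0) with hy
  have hy0 : y ∅ = 1 := by
    simp only [hy, Finset.empty_subset, if_true]
    exact part2
  have hME : ∀ I J : Finset (Fin n), y (I ∪ J)
      = ∑ K : Finset (Fin n), Y K * (if I ⊆ K then (1:ℝ) else 0) * (if J ⊆ K then (1:ℝ) else 0) := by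
    intro I J
    simp only [hy]
    refine Finset.sum_congr rfl fun K _ => ?_
    by_cases h1 : I ⊆ K <;> by_cases h2 : J ⊆ K <;>
      simp [h1, h2, Finset.union_subset_iff]
  have hMfullPSD : (Mfull y).PosSemidef := by
    refine Matrix.PosSemidef.of_dotProduct_mulVec_nonneg ?_ ?_
    · ext I J
      simp only [Mfull, Matrix.conjTranspose_apply, Matrix.of_apply, star_trivial]
      rw [Finset.union_comm]
    · intro x
      have hx : star x = x := by ext i; simp
      rw [hx]
      show (0:ℝ) ≤ ∑ I : Finset (Fin n), x I * ∑ J : Finset (Fin n), Mfull y I J * x J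
      simp only [Mfull, Matrix.of_apply, hME]
      rw [quadform_eq]
      exact Finset.sum_nonneg fun K _ => mul_nonneg (part1 K).le (sq_nonneg _)
  -- the shifted vector
  set c : Finset (Fin n) → ℝ := fun K => Y K * ((K.card:ℝ) - 1/P) with hc
  have hsum_ins : ∀ I : Finset (Fin n), ∑ i : Fin n, y (insert i I)
      = ∑ K : Finset (Fin n), (if I ⊆ K then ((K.card:ℝ)) * Y K else 0) := by
    intro I
    simp only [hy]
    rw [Finset.sum_comm]
    refine Finset.sum_congr rfl fun K _ => ?_
    by_cases h : I ⊆ K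
    · rw [if_pos h]
      have hstep : ∀ i : Fin n, (if insert i I ⊆ K then Y K else 0) = (if i ∈ K then Y K else 0) := by
        intro i
        by_cases hi : i ∈ K <;> simp [Finset.insert_subset_iff, hi, h]
      rw [Finset.sum_congr rfl fun i _ => hstep i, Finset.sum_ite_mem, Finset.univ_inter,
        Finset.sum_const, nsmul_eq_mul]
    · rw [if_neg h]
      refine Finset.sum_eq_zero fun i _ => ?_
      rw [if_neg (fun hc' => h ((Finset.subset_insert i I).trans hc'))]
  have hshift : ∀ I : Finset (Fin n), shiftVec (fun _ : Fin n => (1:ℝ)) (-(1/P)) y I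
      = ∑ K : Finset (Fin n), c K * (if I ⊆ K then (1:ℝ) else 0) := by
    intro I
    simp only [shiftVec, one_mul]
    rw [hsum_ins I]
    simp only [hy]
    rw [Finset.mul_sum, ← Finset.sum_add_distrib]
    refine Finset.sum_congr rfl fun K _ => ?_
    simp only [hc]
    by_cases h : I ⊆ K <;> simp [h] <;> ring
  have hMnE : ∀ I J : Idx n, shiftVec (fun _ : Fin n => (1:ℝ)) (-(1/P)) y (I.1 ∪ J.1)
      = ∑ K : Finset (Fin n), c K * (if I.1 ⊆ K then (1:ℝ) else 0) * (if J.1 ⊆ K then (1:ℝ) else 0) := by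
    intro I J
    rw [hshift]
    refine Finset.sum_congr rfl fun K _ => ?_
    by_cases h1 : I.1 ⊆ K <;> by_cases h2 : J.1 ⊆ K <;>
      simp [h1, h2, Finset.union_subset_iff]
  have hcneg : c ∅ < 0 := by
    simp only [hc, Finset.card_empty, Nat.cast_zero, zero_sub]
    apply mul_neg_of_pos_of_neg hY0pos
    rw [neg_lt_zero]
    positivity
  have hcpos : ∀ K : Finset (Fin n), K ≠ ∅ → 0 < c K := by
    intro K hK
    simp only [hc]
    apply mul_pos (hYposne K hK)
    have h1 := hcard1 K hK
    have h2 : 1/P < 1 := by rw [div_lt_one hP0]; linarith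
    linarith
  have hMnPSD : (Mnm1 (shiftVec (fun _ : Fin n => (1:ℝ)) (-(1/P)) y)).PosSemidef := by
    refine Matrix.PosSemidef.of_dotProduct_mulVec_nonneg ?_ ?_
    · ext I J
      simp only [Mnm1, Matrix.conjTranspose_apply, Matrix.of_apply, star_trivial]
      rw [Finset.union_comm]
    · intro u
      have hu : star u = u := by ext i; simp
      rw [hu]
      show (0:ℝ) ≤ ∑ I : Idx n, u I *
        ∑ J : Idx n, Mnm1 (shiftVec (fun _ : Fin n => (1:ℝ)) (-(1/P)) y) I J * u J
      simp only [Mnm1, Matrix.of_apply, hMnE]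
      rw [quadform_eq]
      have hzero : ∑ K : Finset (Fin n),
          (-1:ℝ)^K.card * (∑ I : Idx n, (if I.1 ⊆ K then (1:ℝ) else 0) * u I) = 0 := by
        have h1 : ∀ K : Finset (Fin n),
            (-1:ℝ)^K.card * (∑ I : Idx n, (if I.1 ⊆ K then (1:ℝ) else 0) * u I)
            = ∑ I : Idx n, (if I.1 ⊆ K then (-1:ℝ)^K.card else 0) * u I := by
          intro K
          rw [Finset.mul_sum]
          refine Finset.sum_congr rfl fun I _ => ?_
          by_cases h : I.1 ⊆ K <;> simp [h]
        rw [Finset.sum_congr rfl fun K _ => h1 K, Finset.sum_comm]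
        refine Finset.sum_eq_zero fun I _ => ?_
        rw [← Finset.sum_mul, sum_superset_neg_one_pow I.1 I.2, zero_mul]
      have hrel : |∑ I : Idx n, (if I.1 ⊆ (∅ : Finset (Fin n)) then (1:ℝ) else 0) * u I|
          ≤ ∑ K ∈ Finset.univ.erase (∅ : Finset (Fin n)),
              |∑ I : Idx n, (if I.1 ⊆ K then (1:ℝ) else 0) * u I| := by
        have h3 := Finset.add_sum_erase Finset.univ
          (fun K : Finset (Fin n) => (-1:ℝ)^K.card * (∑ I : Idx n, (if I.1 ⊆ K then (1:ℝ) else 0) * u I))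
          (Finset.mem_univ ∅)
        rw [hzero] at h3
        simp only [Finset.card_empty, pow_zero, one_mul] at h3
        have h2 : (∑ I : Idx n, (if I.1 ⊆ (∅ : Finset (Fin n)) then (1:ℝ) else 0) * u I)
            = -∑ K ∈ Finset.univ.erase (∅ : Finset (Fin n)),
                (-1:ℝ)^K.card * (∑ I : Idx n, (if I.1 ⊆ K then (1:ℝ) else 0) * u I) := by
          linarith
        rw [h2, abs_neg]
        calc |∑ K ∈ Finset.univ.erase (∅ : Finset (Fin n)),
                (-1:ℝ)^K.card * (∑ I : Idx n, (if I.1 ⊆ K then (1:ℝ) else 0) * u I)|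
            ≤ ∑ K ∈ Finset.univ.erase (∅ : Finset (Fin n)),
                |(-1:ℝ)^K.card * (∑ I : Idx n, (if I.1 ⊆ K then (1:ℝ) else 0) * u I)| :=
              Finset.abs_sum_le_sum_abs _ _
          _ = _ := by
              refine Finset.sum_congr rfl fun K _ => ?_
              rw [abs_mul, abs_pow, abs_neg, abs_one, one_pow, one_mul]
      have hA : ∑ K ∈ Finset.univ.erase (∅ : Finset (Fin n)), 1 / c K ≤ 1 / (-c ∅) := by
        have h4 : ∑ K ∈ Finset.univ.erase (∅ : Finset (Fin n)), 1 / c K = (q - 1) * (P / q) := by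
          rw [← hsfe]
          rw [Finset.sum_congr rfl (fun K hK => by
            rw [show c K = q / P from hcK K (Finset.mem_filter.mp hK).2, one_div_div]),
            Finset.sum_const, nsmul_eq_mul, hcardsR]
        have h5 : 1 / (-c ∅) = P / Y ∅ := by
          simp only [hc, Finset.card_empty, Nat.cast_zero, zero_sub]
          rw [show -(Y ∅ * -(1/P)) = Y ∅ / P by ring]
          rw [one_div_div]
        rw [h4, h5]
        have hqP : q * (P / q) = P := by field_simp
        have hPY : P ≤ P / Y ∅ := by rw [le_div_iff₀ hY0pos]; nlinarith
        have hPq0 : 0 < P / q := div_pos hP0 hq0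
        nlinarith
      exact quad_nonneg c
        (fun K => ∑ I : Idx n, (if I.1 ⊆ K then (1:ℝ) else 0) * u I) ∅ hcneg hcpos hrel hA
  have hobj : ∑ i : Fin n, y {i} ≤ 1 / (k:ℝ) := by
    have h6 : ∑ i : Fin n, y {i} = ∑ I : Finset (Fin n), (I.card:ℝ) * Y I := by
      simp only [hy]
      rw [Finset.sum_comm]
      refine Finset.sum_congr rfl fun K _ => ?_
      have hstep : ∀ i : Fin n, (if {i} ⊆ K then Y K else 0) = (if i ∈ K then Y K else 0) := by
        intro i
        simp [Finset.singleton_subset_iff]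
      rw [Finset.sum_congr rfl fun i _ => hstep i, Finset.sum_ite_mem, Finset.univ_inter,
        Finset.sum_const, nsmul_eq_mul]
    rw [h6]
    exact part4
  -- (vi)
  have part6 : IsLeast {val : ℝ | ∃ I : Finset (Fin n), 1 / P ≤ (I.card : ℝ) ∧ val = (I.card : ℝ)} 1 := by
    constructor
    · refine ⟨{(⟨0, hn⟩ : Fin n)}, ?_, ?_⟩
      · rw [Finset.card_singleton]
        push_cast
        rw [div_le_one hP0]
        linarith
      · rw [Finset.card_singleton]
        norm_num
    · rintro v ⟨I, h1, h2⟩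
      have h3 : I.card ≠ 0 := by
        intro h
        rw [h] at h1
        simp only [Nat.cast_zero] at h1
        have : (0:ℝ) < 1/P := by positivity
        linarith
      have h4 : 1 ≤ I.card := Nat.one_le_iff_ne_zero.mpr h3
      rw [h2]
      exact_mod_cast h4
  exact ⟨part1, part2, part3, part4, ⟨y, hy0, hMfullPSD, hMnPSD, hobj⟩, part6⟩
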